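/- Every path Pₙ on n vertices satisfies F(Pₙ) = ⌊(n−1)/2⌋. -/

import Mathlib

open SimpleGraph

variable {V : Type*}

/-- Closure of the filled set `S` under the zero forcing color change rule:
a filled vertex with exactly one unfilled neighbor fills that neighbor. -/
inductive ZFDerived (G : SimpleGraph V) (S : Set V) : V → Prop
  | init {v : V} : v ∈ S → ZFDerived G S v
  | force {v w : V} : ZFDerived G S v → G.Adj v w →
      (∀ u, G.Adj v u → u ≠ w → ZFDerived G S u) → ZFDerived G S w

/-- The derived set of `S`. -/
def ZFDerivedSet (G : SimpleGraph V) (S : Set V) : Set V := {v | ZFDerived G S v}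

/-- `S` is a zero forcing set if its derived set is all of `V`. -/
def IsZeroForcing (G : SimpleGraph V) (S : Set V) : Prop :=
  ZFDerivedSet G S = Set.univ

/-- `S` is a failed zero forcing set if its derived set is not all of `V`. -/
def IsFailed (G : SimpleGraph V) (S : Set V) : Prop :=
  ZFDerivedSet G S ≠ Set.univ

/-- The failed zero forcing number `F(G)`: the maximum size of a failed zero forcing set. -/
noncomputable def failedZF (G : SimpleGraph V) : ℕ :=
  sSup {k | ∃ S : Finset V, IsFailed G ↑S ∧ S.card = k}

/-- The zero forcing number `Z(G)`: the minimum size of a zero forcing set. -/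
noncomputable def zfNum (G : SimpleGraph V) : ℕ :=
  sInf {k | ∃ S : Finset V, IsZeroForcing G ↑S ∧ S.card = k}

/-- A stalled set contains its derived set. -/
lemma stalled_closed (G : SimpleGraph V) (S : Set V)
    (h : ∀ v ∈ S, ∀ w, G.Adj v w → w ∉ S → ∃ u, G.Adj v u ∧ u ≠ w ∧ u ∉ S) :
    ZFDerivedSet G S ⊆ S := by
  intro x hx
  induction hx with
  | init hv => exact hv
  | @force v w hv hadj hall ihv ihall =>
    by_contra hw
    obtain ⟨u, hu, hne, hus⟩ := h v ihv w hadj hw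
    exact hus (ihall u hu hne)

/-- The derived set is stalled. -/
lemma derived_stalled (G : SimpleGraph V) (S : Set V) :
    ∀ v ∈ ZFDerivedSet G S, ∀ w, G.Adj v w → w ∉ ZFDerivedSet G S →
      ∃ u, G.Adj v u ∧ u ≠ w ∧ u ∉ ZFDerivedSet G S := by
  intro v hv w hadj hw
  by_contra hcon
  push_neg at hcon
  exact hw (ZFDerived.force hv hadj fun u hu hne => hcon u hu hne)

lemma card_le_of_failed {n : ℕ} (S : Finset (Fin n)) (hf : IsFailed (pathGraph n) ↑S) :
    S.card ≤ (n - 1) / 2 := by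
  set D := ZFDerivedSet (pathGraph n) ↑S with hD
  have hSD : ∀ i ∈ S, i ∈ D := fun i hi => ZFDerived.init hi
  have hst := derived_stalled (pathGraph n) (↑S)
  have hne : D ≠ Set.univ := hf
  -- step down
  have sdown : ∀ j (h2 : j + 2 < n), (⟨j+1, by omega⟩ : Fin n) ∈ D →
      (⟨j+2, h2⟩ : Fin n) ∈ D → (⟨j, by omega⟩ : Fin n) ∈ D := by
    intro j h2 h1 hsucc
    by_contra hj
    obtain ⟨u, hu, hune, huD⟩ := hst _ h1 ⟨j, by omega⟩
      (by rw [pathGraph_adj]; right; simp) hj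
    rw [pathGraph_adj] at hu
    simp only [Fin.val_mk] at hu
    have hvne : u.val ≠ j := fun h => hune (Fin.ext h)
    have : u = (⟨j+2, h2⟩ : Fin n) := Fin.ext (show u.val = j + 2 by omega)
    exact huD (this ▸ hsucc)
  -- step up
  have sup : ∀ j (h2 : j + 2 < n), (⟨j, by omega⟩ : Fin n) ∈ D →
      (⟨j+1, by omega⟩ : Fin n) ∈ D → (⟨j+2, h2⟩ : Fin n) ∈ D := by
    intro j h2 hj hj1
    by_contra hc
    obtain ⟨u, hu, hune, huD⟩ := hst _ hj1 ⟨j+2, h2⟩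
      (by rw [pathGraph_adj]; left; simp) hc
    rw [pathGraph_adj] at hu
    simp only [Fin.val_mk] at hu
    have hvne : u.val ≠ j + 2 := fun h => hune (Fin.ext h)
    have : u = (⟨j, by omega⟩ : Fin n) := Fin.ext (show u.val = j by omega)
    exact huD (this ▸ hj)
  -- downward propagation
  have down : ∀ j (h2 : j + 1 < n), (⟨j, by omega⟩ : Fin n) ∈ D →
      (⟨j+1, h2⟩ : Fin n) ∈ D → ∀ m (hm : m ≤ j), (⟨m, by omega⟩ : Fin n) ∈ D := by
    intro j
    induction j with
    | zero =>
      intro h2 h0 _ m hm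
      have hm0 : m = 0 := by omega
      subst hm0; exact h0
    | succ j ih =>
      intro h2 hj1 hj2 m hm
      have hj0 : (⟨j, by omega⟩ : Fin n) ∈ D := sdown j h2 hj1 hj2
      rcases Nat.lt_or_ge m (j+1) with h | h
      · exact ih (by omega) hj0 hj1 m (by omega)
      · have hmj : m = j + 1 := by omega
        subst hmj; exact hj1
  -- upward propagation
  have up : ∀ k j (h2 : j + 1 < n), (⟨j, by omega⟩ : Fin n) ∈ D →
      (⟨j+1, h2⟩ : Fin n) ∈ D → ∀ (hk : j + 1 + k < n), (⟨j+1+k, hk⟩ : Fin n) ∈ D := by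
    intro k
    induction k with
    | zero => intro j h2 hj hj1 hk; exact hj1
    | succ k ih =>
      intro j h2 hj hj1 hk
      have h3 : j + 2 < n := by omega
      have hj2 : (⟨j+2, h3⟩ : Fin n) ∈ D := sup j h3 hj hj1
      have hres := ih (j+1) h3 hj1 hj2 (by omega)
      have heq : (⟨j+1+1+k, by omega⟩ : Fin n) = ⟨j+1+(k+1), hk⟩ :=
        Fin.ext (show j+1+1+k = j+1+(k+1) by omega)
      exact heq ▸ hres
  -- no two adjacent vertices in D
  have no_pair : ∀ j (h1 : j + 1 < n),
      ¬((⟨j, by omega⟩ : Fin n) ∈ D ∧ (⟨j+1, h1⟩ : Fin n) ∈ D) := by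
    rintro j h1 ⟨hj, hj1⟩
    apply hne
    apply Set.eq_univ_of_forall
    intro v
    rcases Nat.lt_or_ge j v.val with h | h
    · have hk : j + 1 + (v.val - (j+1)) < n := by have := v.isLt; omega
      have hres := up (v.val - (j+1)) j h1 hj hj1 hk
      have heq : (⟨j+1+(v.val - (j+1)), hk⟩ : Fin n) = v :=
        Fin.ext (show j+1+(v.val - (j+1)) = v.val by omega)
      exact heq ▸ hres
    · have hres := down j h1 hj hj1 v.val h
      have heq : (⟨v.val, by omega⟩ : Fin n) = v := Fin.ext rfl
      exact heq ▸ hres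
  -- the first vertex is not in D
  have h0 : ∀ (h : 0 < n), (⟨0, h⟩ : Fin n) ∉ D := by
    intro h h0D
    by_cases h1 : 1 < n
    · by_cases h1D : (⟨1, h1⟩ : Fin n) ∈ D
      · exact no_pair 0 h1 ⟨h0D, h1D⟩
      · obtain ⟨u, hu, hune, huD⟩ := hst _ h0D ⟨1, h1⟩
          (by rw [pathGraph_adj]; left; simp) h1D
        rw [pathGraph_adj] at hu
        simp only [Fin.val_mk] at hu
        exact hune (Fin.ext (show u.val = 1 by omega))
    · apply hne
      apply Set.eq_univ_of_forall
      intro v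
      have hv := v.isLt
      have : v = ⟨0, h⟩ := Fin.ext (show v.val = 0 by omega)
      exact this ▸ h0D
  -- the last vertex is not in D
  have hlast : ∀ (h : 0 < n), (⟨n-1, by omega⟩ : Fin n) ∉ D := by
    intro h hD'
    by_cases h2 : 2 ≤ n
    · have hb : n - 2 + 1 < n := by omega
      by_cases hpD : (⟨n-2, by omega⟩ : Fin n) ∈ D
      · have heq : (⟨n-1, by omega⟩ : Fin n) = ⟨n-2+1, hb⟩ :=
          Fin.ext (show n-1 = n-2+1 by omega)
        exact no_pair (n-2) hb ⟨hpD, heq ▸ hD'⟩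
      · obtain ⟨u, hu, hune, huD⟩ := hst _ hD' ⟨n-2, by omega⟩
          (by rw [pathGraph_adj]; right; simp only [Fin.val_mk]; omega) hpD
        rw [pathGraph_adj] at hu
        simp only [Fin.val_mk] at hu
        have hul := u.isLt
        exact hune (Fin.ext (show u.val = n - 2 by omega))
    · apply hne
      apply Set.eq_univ_of_forall
      intro v
      have hv := v.isLt
      have : v = ⟨n-1, by omega⟩ := Fin.ext (show v.val = n - 1 by omega)
      exact this ▸ hD'
  -- every element of S is interior
  have key : ∀ i ∈ S, 1 ≤ i.val ∧ i.val + 1 < n := by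
    intro i hi
    have hiD := hSD i hi
    have h0n : 0 < n := i.pos
    have hil := i.isLt
    constructor
    · by_contra hcon
      apply h0 h0n
      have : (⟨0, h0n⟩ : Fin n) = i := Fin.ext (show 0 = i.val by omega)
      exact this ▸ hiD
    · by_contra hcon
      apply hlast h0n
      have : (⟨n-1, by omega⟩ : Fin n) = i := Fin.ext (show n - 1 = i.val by omega)
      exact this ▸ hiD
  -- no two consecutive elements of S
  have nadj : ∀ i ∈ S, ∀ j ∈ S, i.val + 1 = j.val → False := by
    intro i hi j hj hij
    apply no_pair i.val (by rw [hij]; exact j.isLt)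
    constructor
    · exact hSD i hi
    · have hje : (⟨i.val + 1, by rw [hij]; exact j.isLt⟩ : Fin n) = j := Fin.ext hij
      rw [hje]
      exact hSD j hj
  -- counting
  have hcard : S.card ≤ (Finset.range ((n-1)/2)).card := by
    apply Finset.card_le_card_of_injOn (fun i => (i.val - 1) / 2)
    · intro i hi
      have hk := key i hi
      simp only [Finset.coe_range, Set.mem_Iio, Finset.mem_coe, Finset.mem_range]
      omega
    · intro i hi j hj hij
      have hki := key i (by simpa using hi)
      have hkj := key j (by simpa using hj)
      have hne1 : i.val + 1 ≠ j.val := fun h => nadj i (by simpa using hi) j (by simpa using hj) h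
      have hne2 : j.val + 1 ≠ i.val := fun h => nadj j (by simpa using hj) i (by simpa using hi) h
      have hij' : (i.val - 1) / 2 = (j.val - 1) / 2 := hij
      exact Fin.ext (by omega)
  simpa using hcard

lemma witness_failed (n : ℕ) (hn : 0 < n) :
    ∃ W : Finset (Fin n), IsFailed (pathGraph n) ↑W ∧ W.card = (n - 1) / 2 := by
  set W := Finset.univ.filter (fun i : Fin n => i.val % 2 = 1 ∧ i.val + 1 < n) with hW
  have hmemW : ∀ i : Fin n, i ∈ W ↔ (i.val % 2 = 1 ∧ i.val + 1 < n) := by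
    intro i; simp [hW]
  have hstall : ∀ v ∈ (↑W : Set (Fin n)), ∀ w, (pathGraph n).Adj v w → w ∉ (↑W : Set (Fin n)) →
      ∃ u, (pathGraph n).Adj v u ∧ u ≠ w ∧ u ∉ (↑W : Set (Fin n)) := by
    intro v hv w hadj _
    have hv' : v.val % 2 = 1 ∧ v.val + 1 < n := (hmemW v).1 (by simpa using hv)
    rw [pathGraph_adj] at hadj
    rcases hadj with h | h
    · -- w = v + 1, take u = v - 1
      refine ⟨⟨v.val - 1, by omega⟩, ?_, ?_, ?_⟩
      · rw [pathGraph_adj]; right; show v.val - 1 + 1 = v.val; omega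
      · intro he
        have := congrArg Fin.val he
        simp only [Fin.val_mk] at this
        omega
      · intro hmem
        have hm := (hmemW _).1 (Finset.mem_coe.1 hmem)
        simp only [Fin.val_mk] at hm
        omega
    · -- w = v - 1, take u = v + 1
      refine ⟨⟨v.val + 1, by omega⟩, ?_, ?_, ?_⟩
      · rw [pathGraph_adj]; left; simp only [Fin.val_mk]
      · intro he
        have := congrArg Fin.val he
        simp only [Fin.val_mk] at this
        omega
      · intro hmem
        have hm := (hmemW _).1 (Finset.mem_coe.1 hmem)
        simp only [Fin.val_mk] at hm
        omega
  refine ⟨W, ?_, ?_⟩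
  · intro hcon
    have h0mem : (⟨0, hn⟩ : Fin n) ∈ ZFDerivedSet (pathGraph n) ↑W := by
      rw [hcon]; trivial
    have := stalled_closed (pathGraph n) ↑W hstall h0mem
    have := (hmemW _).1 (by simpa using this)
    simp at this
  · rw [show (n-1)/2 = (Finset.range ((n-1)/2)).card from (Finset.card_range _).symm]
    refine Finset.card_bij' (fun (a : Fin n) (_ : a ∈ W) => (a.val - 1) / 2)
      (fun k hk => (⟨2*k+1, by simp only [Finset.mem_range] at hk; omega⟩ : Fin n))
      ?_ ?_ ?_ ?_
    · intro a ha
      have h := (hmemW a).1 ha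
      simp only [Finset.mem_range]
      omega
    · intro k hk
      have h := Finset.mem_range.1 hk
      exact (hmemW _).2 ⟨show (2*k+1) % 2 = 1 by omega, show 2*k+1+1 < n by omega⟩
    · intro a ha
      have h := (hmemW a).1 ha
      exact Fin.ext (show 2*((a.val-1)/2)+1 = a.val by omega)
    · intro k hk
      have h := Finset.mem_range.1 hk
      show (2*k+1-1)/2 = k
      omega

theorem failedZF_pathGraph (n : ℕ) :
    failedZF (pathGraph n) = (n - 1) / 2 := by
  rcases Nat.eq_zero_or_pos n with rfl | hn
  · unfold failedZF
    have hempty : {k | ∃ S : Finset (Fin 0), IsFailed (pathGraph 0) ↑S ∧ S.card = k} = ∅ := by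
      ext k
      simp only [Set.mem_setOf_eq, Set.mem_empty_iff_false, iff_false, not_exists]
      rintro S ⟨hS, -⟩
      exact hS (Set.eq_univ_of_forall fun v => v.elim0)
    rw [hempty, csSup_empty]
    rfl
  · have hub : ∀ k ∈ {k | ∃ S : Finset (Fin n), IsFailed (pathGraph n) ↑S ∧ S.card = k},
        k ≤ (n-1)/2 := by
      rintro k ⟨S, hS, rfl⟩
      exact card_le_of_failed S hS
    obtain ⟨W, hWf, hWc⟩ := witness_failed n hn
    unfold failedZF
    apply le_antisymm
    · exact csSup_le ⟨W.card, W, hWf, rfl⟩ hub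
    · exact le_csSup ⟨(n-1)/2, hub⟩ ⟨W, hWf, hWc⟩
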